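/- The linear map ψ : T_n(q) → (T_n(q))* defined on the canonical basis by ψ(g^i x^j) = Σ_{k=0}^{n−1} (j)_q! · q^{−i(k+j) − jk − j(j−1)/2} · (g^k x^j)* is an isomorphism of Hopf algebras; concretely, ψ is bijective with inverse φ given by φ((g^i x^j)*) = (1/n)·((j)_q!)^{−1}·q^{ij + j(j−1)/2}·Σ_{k=0}^{n−1} q^{k(i+j)} g^k x^j, ψ(hh') = ψ(h) * ψ(h') (convolution product) and ψ(1) = ε for all h, h' ∈ T_n(q), and for all h, c, c' ∈ T_n(q) one has ψ(h)(cc') = Σ ψ(h₁)(c)·ψ(h₂)(c') and ψ(h)(1) = ε(h). (Lemma 3.2.1) -/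

import Mathlib

open scoped TensorProduct

/-- The Gaussian binomial coefficient `binom(m, ℓ)_q` in a field `k`, defined by
`binom(0,0)_q = 1`, `binom(m,ℓ)_q = 0` for `ℓ < 0` or `ℓ > m`, and the q-Pascal rule
`binom(i,s)_q = binom(i-1,s-1)_q + q^s · binom(i-1,s)_q` for `i ≥ 1`. -/
def qbinom {k : Type*} [Field k] (q : k) : ℕ → ℤ → k
  | 0, s => if s = 0 then 1 else 0
  | (i + 1), s => qbinom q i (s - 1) + q ^ s.toNat * qbinom q i s

/-- The q-number `(m)_q = 1 + q + ⋯ + q^{m−1}`. -/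
def qnum {k : Type*} [Field k] (q : k) (m : ℕ) : k := ∑ l ∈ Finset.range m, q ^ l

/-- The q-factorial `(m)_q! = (m)_q (m−1)_q ⋯ (1)_q`, with `(0)_q! = 1`. -/
def qfact {k : Type*} [Field k] (q : k) : ℕ → k
  | 0 => 1
  | (m + 1) => qnum q (m + 1) * qfact q m

/-- The linear map `h ↦ Σ λ(h₁) h₂` (Sweedler notation). -/
noncomputable def lCont (k H : Type*) [CommSemiring k] [Semiring H] [Bialgebra k H]
    (lam : H →ₗ[k] k) : H →ₗ[k] H :=
  (TensorProduct.lid k H).toLinearMap ∘ₗ TensorProduct.map lam LinearMap.id ∘ₗ Coalgebra.comul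

/-- The linear map `h ↦ Σ h₁ λ(h₂)` (Sweedler notation). -/
noncomputable def rCont (k H : Type*) [CommSemiring k] [Semiring H] [Bialgebra k H]
    (lam : H →ₗ[k] k) : H →ₗ[k] H :=
  (TensorProduct.rid k H).toLinearMap ∘ₗ TensorProduct.map LinearMap.id lam ∘ₗ Coalgebra.comul

/-- A partial action of a bialgebra `H` on its base field `k`: a linear map `λ : H → k` with
`λ(1) = 1` and `λ(h)λ(y) = Σ λ(h₁)λ(h₂y)` for all `h, y ∈ H`; by linearity the right-hand side
is `λ((Σ λ(h₁) h₂) · y)`. -/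
def IsPartialAction (k H : Type*) [CommSemiring k] [Semiring H] [Bialgebra k H]
    (lam : H →ₗ[k] k) : Prop :=
  lam 1 = 1 ∧ ∀ h y : H, lam h * lam y = lam (lCont k H lam h * y)

/-- A symmetric partial action additionally satisfies `λ(h)λ(y) = Σ λ(h₁y)λ(h₂)`, i.e.
`λ(h)λ(y) = λ((Σ h₁ λ(h₂)) · y)`. -/
def IsSymmPartialAction (k H : Type*) [CommSemiring k] [Semiring H] [Bialgebra k H]
    (lam : H →ₗ[k] k) : Prop :=
  IsPartialAction k H lam ∧ ∀ h y : H, lam h * lam y = lam (rCont k H lam h * y)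

/-- A realization of the Taft algebra `T_n(q)`: a Hopf algebra `H` over `k` with generators
`g, x` satisfying `g^n = 1`, `x^n = 0`, `xg = q·gx`, such that `{g^i x^j : 0 ≤ i,j ≤ n−1}` is a
`k`-basis, `g` is group-like and `x` is `(1,g)`-primitive. -/
structure TaftData (k : Type*) [Field k] (n : ℕ) (q : k) (H : Type*)
    [Ring H] [HopfAlgebra k H] where
  g : H
  x : H
  g_pow_n : g ^ n = 1
  x_pow_n : x ^ n = 0
  x_mul_g : x * g = q • (g * x)
  basis : Module.Basis (Fin n × Fin n) k H
  basis_eq : ∀ i j : Fin n, basis (i, j) = g ^ (i : ℕ) * x ^ (j : ℕ)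
  comul_g : Coalgebra.comul (R := k) g = g ⊗ₜ[k] g
  comul_x : Coalgebra.comul (R := k) x = x ⊗ₜ[k] (1 : H) + g ⊗ₜ[k] x
  counit_g : Coalgebra.counit (R := k) g = 1
  counit_x : Coalgebra.counit (R := k) x = 0

/-- The convolution product on the dual `H* = H →ₗ[k] k` of a coalgebra:
`(f * f')(c) = Σ f(c₁) f'(c₂)`. -/
noncomputable def conv (k H : Type*) [CommSemiring k] [Semiring H] [Bialgebra k H]
    (f f' : H →ₗ[k] k) : H →ₗ[k] k :=
  LinearMap.mul' k k ∘ₗ TensorProduct.map f f' ∘ₗ Coalgebra.comul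

section Scalar
variable {k : Type*} [Field k] {q : k}

theorem qbinom_neg (q : k) : ∀ (m : ℕ) (s : ℤ), s < 0 → qbinom q m s = 0
  | 0, s, hs => by simp [qbinom, hs.ne]
  | (m+1), s, hs => by
      simp [qbinom, qbinom_neg q m (s-1) (by omega), qbinom_neg q m s hs]

theorem qbinom_gt (q : k) : ∀ (m : ℕ) (s : ℤ), (m : ℤ) < s → qbinom q m s = 0
  | 0, s, hs => by simp [qbinom]; omega
  | (m+1), s, hs => by
      simp [qbinom, qbinom_gt q m (s-1) (by omega), qbinom_gt q m s (by omega)]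

theorem qbinom_zero (q : k) : ∀ (m : ℕ), qbinom q m 0 = 1
  | 0 => by simp [qbinom]
  | (m+1) => by simp [qbinom, qbinom_neg q m (-1) (by omega), qbinom_zero q m]

theorem qnum_add (q : k) (b a : ℕ) : qnum q (b + a) = qnum q b + q ^ b * qnum q a := by
  induction a with
  | zero => simp [qnum]
  | succ a ih =>
      have e : qnum q (b+a+1) = qnum q (b+a) + q^(b+a) := by
        rw [qnum, Finset.sum_range_succ]; rfl
      have e2 : qnum q (a+1) = qnum q a + q^a := by
        rw [qnum, Finset.sum_range_succ]; rfl
      rw [show b + (a+1) = b+a+1 by omega, e, ih, e2, pow_add]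
      ring

theorem qfact_mul_qbinom (q : k) : ∀ (m : ℕ), ∀ a b : ℕ, a + b = m →
    qbinom q m (b : ℤ) * qfact q a * qfact q b = qfact q m
  | 0, a, b, h => by
      obtain ⟨rfl, rfl⟩ : a = 0 ∧ b = 0 := by omega
      simp [qbinom, qfact]
  | (m+1), a, b, h => by
      match b with
      | 0 =>
        obtain rfl : a = m + 1 := by omega
        simp [qbinom_zero, qfact]
      | (b'+1) =>
        show (qbinom q m ((b':ℤ)+1-1) + q ^ ((b':ℤ)+1).toNat * qbinom q m ((b':ℤ)+1)) *
          qfact q a * qfact q (b'+1) = qfact q (m+1)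
        have hb : ((b':ℤ)+1-1) = (b' : ℤ) := by ring
        have hb2 : ((b':ℤ)+1).toNat = b' + 1 := by omega
        rw [hb, hb2]
        match a with
        | 0 =>
          obtain rfl : m = b' := by omega
          rw [qbinom_gt q m ((m:ℤ)+1) (by omega)]
          have h1 : qbinom q m (m:ℤ) * qfact q 0 * qfact q m = qfact q m :=
            qfact_mul_qbinom q m 0 m (by omega)
          simp only [mul_zero, add_zero]
          show qbinom q m (m:ℤ) * qfact q 0 * qfact q (m+1) = qfact q (m+1)
          simp only [mul_zero, add_zero, qfact] at h1 ⊢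
          linear_combination qnum q (m+1) * h1
        | (a'+1) =>
          have h1 := qfact_mul_qbinom q m (a'+1) b' (by omega)
          have h2 := qfact_mul_qbinom q m a' (b'+1) (by omega)
          have e1 : qfact q (b'+1) = qnum q (b'+1) * qfact q b' := rfl
          have e2 : qfact q (a'+1) = qnum q (a'+1) * qfact q a' := rfl
          have e3 : qnum q (b'+1) + q ^ (b'+1) * qnum q (a'+1) = qnum q (m+1) := by
            rw [← qnum_add q (b'+1) (a'+1)]; congr 1; omega
          calc (qbinom q m (b':ℤ) + q ^ (b'+1) * qbinom q m ((b':ℤ)+1)) * qfact q (a'+1) *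
              qfact q (b'+1)
              = qnum q (b'+1) * (qbinom q m (b':ℤ) * qfact q (a'+1) * qfact q b')
                + q ^ (b'+1) * qnum q (a'+1) *
                  (qbinom q m (((b'+1):ℕ):ℤ) * qfact q a' * qfact q (b'+1)) := by
                rw [e1, e2]; push_cast; ring
            _ = (qnum q (b'+1) + q ^ (b'+1) * qnum q (a'+1)) * qfact q m := by
                rw [h1, h2]; ring
            _ = qfact q (m+1) := by rw [e3]; rfl

end Scalar
section QBT
variable {k : Type*} [Field k] {q : k} {R : Type*} [Ring R] [Algebra k R]

theorem qpow_comm {A B : R} (h : B * A = q • (A * B)) :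
    ∀ ℓ : ℕ, B * A ^ ℓ = q ^ ℓ • (A ^ ℓ * B)
  | 0 => by simp
  | (ℓ+1) => by
    calc B * A ^ (ℓ+1) = (B * A) * A ^ ℓ := by rw [pow_succ', mul_assoc]
    _ = q • ((A * B) * A ^ ℓ) := by rw [h, smul_mul_assoc]
    _ = q • (A * (B * A ^ ℓ)) := by rw [mul_assoc]
    _ = q • (A * (q ^ ℓ • (A ^ ℓ * B))) := by rw [qpow_comm h ℓ]
    _ = (q * q ^ ℓ) • (A * (A ^ ℓ * B)) := by rw [mul_smul_comm, smul_smul]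
    _ = q ^ (ℓ+1) • (A ^ (ℓ+1) * B) := by rw [← mul_assoc, ← pow_succ', ← pow_succ']

theorem q_binomial {A B : R} (h : B * A = q • (A * B)) (m : ℕ) :
    (A + B) ^ m = ∑ ℓ ∈ Finset.range (m+1),
      qbinom q m (ℓ : ℤ) • (A ^ ℓ * B ^ (m - ℓ)) := by
  induction m with
  | zero => simp [qbinom]
  | succ m ih =>
    have key : ∀ ℓ, ℓ ≤ m → B * (A ^ ℓ * B ^ (m - ℓ)) = q ^ ℓ • (A ^ ℓ * B ^ (m + 1 - ℓ)) := by
      intro ℓ hℓ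
      rw [show m + 1 - ℓ = (m - ℓ) + 1 by omega, ← mul_assoc, qpow_comm h ℓ, smul_mul_assoc,
        mul_assoc, ← pow_succ']
    have step : ∀ ℓ ∈ Finset.range (m+1),
        (A + B) * (qbinom q m (ℓ:ℤ) • (A ^ ℓ * B ^ (m - ℓ)))
        = qbinom q m (ℓ:ℤ) • (A ^ (ℓ+1) * B ^ (m + 1 - (ℓ+1)))
          + (q ^ ℓ * qbinom q m (ℓ:ℤ)) • (A ^ ℓ * B ^ (m + 1 - ℓ)) := by
      intro ℓ hℓ
      have hl : ℓ ≤ m := by have := Finset.mem_range.1 hℓ; omega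
      have e : (A+B) * (A ^ ℓ * B ^ (m - ℓ))
          = A ^ (ℓ+1) * B ^ (m - ℓ) + q ^ ℓ • (A ^ ℓ * B ^ (m+1-ℓ)) := by
        rw [add_mul, key ℓ hl, ← mul_assoc, ← pow_succ']
      rw [mul_smul_comm, e, smul_add, smul_smul, show m+1-(ℓ+1) = m - ℓ by omega,
        mul_comm (qbinom q m (ℓ:ℤ)) (q ^ ℓ)]
    rw [pow_succ', ih, Finset.mul_sum, Finset.sum_congr rfl step, Finset.sum_add_distrib]
    have e1 : ∑ ℓ ∈ Finset.range (m+1), qbinom q m (ℓ:ℤ) • (A ^ (ℓ+1) * B ^ (m + 1 - (ℓ+1)))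
        = ∑ ℓ ∈ Finset.range (m+2), qbinom q m ((ℓ:ℤ)-1) • (A ^ ℓ * B ^ (m + 1 - ℓ)) := by
      rw [Finset.sum_range_succ' (fun ℓ => qbinom q m ((ℓ:ℤ)-1) • (A ^ ℓ * B ^ (m + 1 - ℓ))) (m+1)]
      rw [show ((0:ℕ):ℤ) - 1 = -1 by norm_num, qbinom_neg q m (-1) (by omega)]
      simp only [zero_smul, add_zero]
      refine Finset.sum_congr rfl fun ℓ _ => ?_
      congr 1
      push_cast
      ring_nf
    have e2 : ∑ ℓ ∈ Finset.range (m+2), (q ^ ℓ * qbinom q m (ℓ:ℤ)) • (A ^ ℓ * B ^ (m + 1 - ℓ))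
        = ∑ ℓ ∈ Finset.range (m+1), (q ^ ℓ * qbinom q m (ℓ:ℤ)) • (A ^ ℓ * B ^ (m + 1 - ℓ)) := by
      rw [Finset.sum_range_succ, qbinom_gt q m ((m+1:ℕ):ℤ) (by push_cast; omega)]
      simp
    rw [e1, ← e2, ← Finset.sum_add_distrib]
    refine Finset.sum_congr rfl fun ℓ _ => ?_
    rw [← add_smul]
    congr 1

end QBT

section Root
variable {k : Type*} [Field k] {n : ℕ} {q : k}

theorem zpow_congr (hn : 2 ≤ n) (hq : IsPrimitiveRoot q n) {z z' : ℤ} (h : (n:ℤ) ∣ z - z') :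
    q ^ z = q ^ z' := by
  have hq0 : q ≠ 0 := hq.ne_zero (by omega)
  have h1 : q ^ (z - z') = 1 := (hq.zpow_eq_one_iff_dvd (z - z')).2 h
  calc q ^ z = q ^ (z' + (z - z')) := by congr 1; ring
  _ = q ^ z' * q ^ (z - z') := zpow_add₀ hq0 _ _
  _ = q ^ z' := by rw [h1, mul_one]

theorem gauss_sum (hn : 2 ≤ n) (hq : IsPrimitiveRoot q n) (t : ℤ) :
    ∑ m ∈ Finset.range n, q ^ ((m:ℤ) * t) = if (n:ℤ) ∣ t then (n:k) else 0 := by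
  have hq0 : q ≠ 0 := hq.ne_zero (by omega)
  have key : ∀ m : ℕ, q ^ ((m:ℤ) * t) = (q ^ t) ^ m := by
    intro m
    rw [show (m:ℤ) * t = t * m by ring, zpow_mul, zpow_natCast]
  simp only [key]
  by_cases hd : (n:ℤ) ∣ t
  · rw [if_pos hd, (hq.zpow_eq_one_iff_dvd t).2 hd]
    simp
  · rw [if_neg hd]
    have hne : q ^ t ≠ 1 := fun hc => hd ((hq.zpow_eq_one_iff_dvd t).1 hc)
    have hpow : (q ^ t) ^ n = 1 := by
      rw [← zpow_natCast, ← zpow_mul, show t * (n:ℤ) = (n:ℤ) * t by ring, zpow_mul,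
        zpow_natCast, hq.pow_eq_one, one_zpow]
    rw [geom_sum_eq hne, hpow, sub_self, zero_div]

theorem qnum_n (hn : 2 ≤ n) (hq : IsPrimitiveRoot q n) : qnum q n = 0 :=
  hq.geom_sum_eq_zero (by omega)

theorem qfact_zero_of_le (hn : 2 ≤ n) (hq : IsPrimitiveRoot q n) :
    ∀ m, n ≤ m → qfact q m = 0 := by
  intro m hm
  induction m with
  | zero => omega
  | succ m ih =>
    show qnum q (m+1) * qfact q m = 0
    rcases Nat.lt_or_ge m n with h | h
    · rw [show m + 1 = n by omega, qnum_n hn hq, zero_mul]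
    · rw [ih h, mul_zero]

theorem qnum_ne_zero (hn : 2 ≤ n) (hq : IsPrimitiveRoot q n) {m : ℕ} (h0 : 0 < m) (h1 : m < n) :
    qnum q m ≠ 0 := by
  have hne : q ≠ 1 := hq.ne_one (by omega)
  have : qnum q m = (q ^ m - 1) / (q - 1) := geom_sum_eq hne m
  rw [this]
  have hpow : q ^ m ≠ 1 := hq.pow_ne_one_of_pos_of_lt h0.ne' h1
  exact div_ne_zero (sub_ne_zero.2 hpow) (sub_ne_zero.2 hne)

theorem qfact_ne_zero (hn : 2 ≤ n) (hq : IsPrimitiveRoot q n) :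
    ∀ m, m < n → qfact q m ≠ 0 := by
  intro m hm
  induction m with
  | zero => simp [qfact]
  | succ m ih =>
    show qnum q (m+1) * qfact q m ≠ 0
    exact mul_ne_zero (qnum_ne_zero hn hq (by omega) hm) (ih (by omega))

theorem n_ne_zero (hn : 2 ≤ n) (hq : IsPrimitiveRoot q n) : (n : k) ≠ 0 := by
  have : NeZero n := ⟨by omega⟩
  exact hq.neZero'.out

end Root
section TaftLemmas
variable {k H : Type*} [Field k] [Ring H] [HopfAlgebra k H]
  {n : ℕ} {q : k}

theorem x_pow_mul_g_pow (T : TaftData k n q H) (a b : ℕ) :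
    T.x ^ b * T.g ^ a = q ^ (a * b) • (T.g ^ a * T.x ^ b) := by
  induction b with
  | zero => simp
  | succ b ih =>
    have h1 : T.x * T.g ^ a = q ^ a • (T.g ^ a * T.x) := qpow_comm T.x_mul_g a
    calc T.x ^ (b+1) * T.g ^ a = T.x ^ b * (T.x * T.g ^ a) := by
          rw [pow_succ, mul_assoc]
      _ = q ^ a • (T.x ^ b * (T.g ^ a * T.x)) := by rw [h1, mul_smul_comm]
      _ = q ^ a • ((T.x ^ b * T.g ^ a) * T.x) := by rw [mul_assoc]
      _ = q ^ a • (q ^ (a*b) • ((T.g ^ a * T.x ^ b) * T.x)) := by rw [ih, smul_mul_assoc]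
      _ = q ^ (a * (b+1)) • (T.g ^ a * T.x ^ (b+1)) := by
          rw [smul_smul, ← pow_add, mul_assoc, ← pow_succ]
          congr 2
          ring

theorem basis_mul_basis (T : TaftData k n q H) (i j a b : ℕ) :
    (T.g ^ i * T.x ^ j) * (T.g ^ a * T.x ^ b)
      = q ^ (a * j) • (T.g ^ (i+a) * T.x ^ (j+b)) := by
  calc (T.g ^ i * T.x ^ j) * (T.g ^ a * T.x ^ b)
      = T.g ^ i * (T.x ^ j * T.g ^ a) * T.x ^ b := by rw [mul_assoc, mul_assoc, mul_assoc]
    _ = q ^ (a * j) • (T.g ^ i * (T.g ^ a * T.x ^ j) * T.x ^ b) := by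
        rw [x_pow_mul_g_pow T a j, mul_smul_comm, smul_mul_assoc]
    _ = q ^ (a * j) • (T.g ^ (i+a) * T.x ^ (j+b)) := by
        congr 1
        rw [pow_add, pow_add]
        noncomm_ring

theorem g_pow_mod (T : TaftData k n q H) (a : ℕ) : T.g ^ a = T.g ^ (a % n) := by
  conv_lhs => rw [← Nat.div_add_mod a n]
  rw [pow_add, pow_mul, T.g_pow_n, one_pow, one_mul]

theorem x_pow_zero (T : TaftData k n q H) {b : ℕ} (hb : n ≤ b) : T.x ^ b = 0 := by
  rw [← Nat.add_sub_cancel' hb, pow_add, T.x_pow_n, zero_mul]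

theorem comul_basis (T : TaftData k n q H) (i j : ℕ) :
    Coalgebra.comul (R := k) (T.g ^ i * T.x ^ j)
      = ∑ ℓ ∈ Finset.range (j+1), qbinom q j (ℓ:ℤ) •
          ((T.g ^ (i+ℓ) * T.x ^ (j-ℓ)) ⊗ₜ[k] (T.g ^ i * T.x ^ ℓ)) := by
  have hA : (T.x ⊗ₜ[k] (1:H)) * (T.g ⊗ₜ[k] T.x) = q • ((T.g ⊗ₜ[k] T.x) * (T.x ⊗ₜ[k] (1:H))) := by
    rw [Algebra.TensorProduct.tmul_mul_tmul, Algebra.TensorProduct.tmul_mul_tmul,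
      T.x_mul_g, one_mul, mul_one, TensorProduct.smul_tmul']
  have h1 : Coalgebra.comul (R := k) (T.g ^ i * T.x ^ j)
      = (Coalgebra.comul (R := k) T.g) ^ i * (Coalgebra.comul (R := k) T.x) ^ j := by
    rw [Bialgebra.comul_mul, Bialgebra.comul_pow, Bialgebra.comul_pow]
  rw [h1, T.comul_g, T.comul_x, Algebra.TensorProduct.tmul_pow,
    show T.x ⊗ₜ[k] (1:H) + T.g ⊗ₜ[k] T.x = T.g ⊗ₜ[k] T.x + T.x ⊗ₜ[k] (1:H) from add_comm _ _,
    q_binomial hA j, Finset.mul_sum]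
  refine Finset.sum_congr rfl fun ℓ _ => ?_
  rw [mul_smul_comm]
  congr 1
  rw [Algebra.TensorProduct.tmul_pow, Algebra.TensorProduct.tmul_pow,
    Algebra.TensorProduct.tmul_mul_tmul, Algebra.TensorProduct.tmul_mul_tmul,
    one_pow, mul_one, ← mul_assoc, ← pow_add]

theorem counit_basis (T : TaftData k n q H) (a b : ℕ) :
    Coalgebra.counit (R := k) (T.g ^ a * T.x ^ b) = if b = 0 then 1 else 0 := by
  rw [Bialgebra.counit_mul, Bialgebra.counit_pow, Bialgebra.counit_pow, T.counit_g, T.counit_x,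
    one_pow, one_mul]
  cases b with
  | zero => simp
  | succ b => simp [zero_pow]

theorem coord_basis (hn : 2 ≤ n) (T : TaftData k n q H) (m j : Fin n) (a b : ℕ) :
    T.basis.coord (m, j) (T.g ^ a * T.x ^ b)
      = if ((m:ℕ) = a % n ∧ (j:ℕ) = b) then 1 else 0 := by
  rcases Nat.lt_or_ge b n with hb | hb
  · rw [g_pow_mod T a,
      show T.g ^ (a % n) * T.x ^ b
        = T.basis (⟨a % n, Nat.mod_lt _ (by omega)⟩, ⟨b, hb⟩)
        from (T.basis_eq ⟨a % n, Nat.mod_lt _ (by omega)⟩ ⟨b, hb⟩).symm,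
      Module.Basis.coord_apply, Module.Basis.repr_self, Finsupp.single_apply]
    have : ((⟨a % n, Nat.mod_lt _ (by omega)⟩, ⟨b, hb⟩) : Fin n × Fin n) = (m, j)
        ↔ ((m:ℕ) = a % n ∧ (j:ℕ) = b) := by
      rw [Prod.ext_iff, Fin.ext_iff, Fin.ext_iff]
      constructor <;> (rintro ⟨h1, h2⟩; exact ⟨h1.symm, h2.symm⟩)
    simp only [this]
  · rw [x_pow_zero T hb, mul_zero, map_zero]
    have : ¬ ((m:ℕ) = a % n ∧ (j:ℕ) = b) := by
      rintro ⟨-, h2⟩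
      have := j.isLt
      omega
    rw [if_neg this]

end TaftLemmas
/-- The exponent `E(i,j,a) = −i(a+j) − ja − j(j−1)/2`. -/
def EE (i j a : ℕ) : ℤ :=
  -((i:ℤ) * ((a:ℤ) + (j:ℤ))) - (j:ℤ) * (a:ℤ) - ((j*(j-1)/2 : ℕ) : ℤ)

theorem tri (j b : ℕ) : (j+b)*((j+b)-1)/2 = j*(j-1)/2 + b*(b-1)/2 + j*b := by
  have half : ∀ m : ℕ, ∃ t, m*(m-1) = 2*t := by
    intro m
    rcases Nat.even_or_odd m with h | h
    · obtain ⟨r, hr⟩ := h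
      exact ⟨r*(m-1), by rw [hr]; ring⟩
    · obtain ⟨r, hr⟩ := h
      refine ⟨m*r, ?_⟩
      rw [show m - 1 = 2*r by omega]
      ring
  obtain ⟨t1, h1⟩ := half (j+b)
  obtain ⟨t2, h2⟩ := half j
  obtain ⟨t3, h3⟩ := half b
  rw [h1, h2, h3, Nat.mul_div_cancel_left _ (by norm_num : 0 < 2),
    Nat.mul_div_cancel_left _ (by norm_num : 0 < 2),
    Nat.mul_div_cancel_left _ (by norm_num : 0 < 2)]
  have key : (2*t1 : ℤ) = 2*(t2 + t3 + j*b) := by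
    have h1' : ((j:ℤ)+b)*((j:ℤ)+b-1) = 2*t1 := by
      rcases Nat.eq_zero_or_pos (j+b) with h | h
      · obtain ⟨rfl, rfl⟩ : j = 0 ∧ b = 0 := by omega
        simp at h1 ⊢
        omega
      · have : ((j+b : ℕ) : ℤ) * (((j+b)-1 : ℕ) : ℤ) = 2*t1 := by exact_mod_cast h1
        rw [show (((j+b)-1 : ℕ) : ℤ) = (j:ℤ)+b-1 by omega] at this
        push_cast at this ⊢
        linarith
    have h2' : (j:ℤ)*((j:ℤ)-1) = 2*t2 := by
      rcases Nat.eq_zero_or_pos j with rfl | h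
      · simp at h2 ⊢; omega
      · have : ((j:ℕ):ℤ) * ((j-1 : ℕ) : ℤ) = 2*t2 := by exact_mod_cast h2
        rw [show ((j-1 : ℕ) : ℤ) = (j:ℤ)-1 by omega] at this
        exact this
    have h3' : (b:ℤ)*((b:ℤ)-1) = 2*t3 := by
      rcases Nat.eq_zero_or_pos b with rfl | h
      · simp at h3 ⊢; omega
      · have : ((b:ℕ):ℤ) * ((b-1 : ℕ) : ℤ) = 2*t3 := by exact_mod_cast h3
        rw [show ((b-1 : ℕ) : ℤ) = (b:ℤ)-1 by omega] at this
        exact this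
    linear_combination -h1' + h2' + h3'
  have key' : (2*t1 : ℕ) = 2*(t2 + t3 + j*b) := by exact_mod_cast key
  omega

theorem tri_cast (j b : ℕ) :
    (((j+b)*((j+b)-1)/2 : ℕ) : ℤ)
      = ((j*(j-1)/2 : ℕ) : ℤ) + ((b*(b-1)/2 : ℕ) : ℤ) + (j:ℤ)*(b:ℤ) := by
  rw [tri j b]
  push_cast
  ring

theorem EE_add1 (i j a b s : ℕ) :
    ((a*j : ℕ):ℤ) + EE (i+a) (j+b) s = EE i j (s+b) + EE a b s := by
  simp only [EE, tri_cast]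
  push_cast
  ring

theorem EE_add2 (i b t a s : ℕ) :
    ((s*b : ℕ):ℤ) + EE i (b+t) (a+s) = EE (i+t) b a + EE i t s := by
  simp only [EE, show b + t = t + b from add_comm b t, tri_cast]
  push_cast
  ring

theorem EE_congr {n : ℕ} (hn : 2 ≤ n) (i j a : ℕ) :
    (n:ℤ) ∣ (EE i j a - EE (i % n) j (a % n)) := by
  have hi : (i:ℤ) = (n:ℤ) * ((i/n : ℕ):ℤ) + ((i % n : ℕ):ℤ) := by
    exact_mod_cast (Nat.div_add_mod i n).symm
  have ha : (a:ℤ) = (n:ℤ) * ((a/n : ℕ):ℤ) + ((a % n : ℕ):ℤ) := by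
    exact_mod_cast (Nat.div_add_mod a n).symm
  refine ⟨-(n:ℤ)*((i/n:ℕ):ℤ)*((a/n:ℕ):ℤ) - ((i/n:ℕ):ℤ)*((a%n:ℕ):ℤ)
    - ((a/n:ℕ):ℤ)*((i%n:ℕ):ℤ) - ((i/n:ℕ):ℤ)*(j:ℤ) - ((a/n:ℕ):ℤ)*(j:ℤ), ?_⟩
  simp only [EE]
  rw [hi, ha]
  ring
/-- `conv` as a bilinear map. -/
noncomputable def convBil (k H : Type*) [CommSemiring k] [Semiring H] [Bialgebra k H] :
    (H →ₗ[k] k) →ₗ[k] (H →ₗ[k] k) →ₗ[k] (H →ₗ[k] k) :=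
  LinearMap.mk₂ k (conv k H)
    (fun f f' g => by
      simp only [conv, TensorProduct.map_add_left, LinearMap.add_comp, LinearMap.comp_add])
    (fun c f g => by
      simp only [conv, TensorProduct.map_smul_left, LinearMap.smul_comp, LinearMap.comp_smul])
    (fun f g g' => by
      simp only [conv, TensorProduct.map_add_right, LinearMap.add_comp, LinearMap.comp_add])
    (fun c f g => by
      simp only [conv, TensorProduct.map_smul_right, LinearMap.smul_comp, LinearMap.comp_smul])

theorem convBil_apply {k H : Type*} [CommSemiring k] [Semiring H] [Bialgebra k H]
    (f f' : H →ₗ[k] k) : convBil k H f f' = conv k H f f' := rfl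

theorem conv_basis {k H : Type*} [Field k] [Ring H] [HopfAlgebra k H] {n : ℕ} {q : k}
    (T : TaftData k n q H) (f f' : H →ₗ[k] k) (s c : ℕ) :
    conv k H f f' (T.g ^ s * T.x ^ c) = ∑ ℓ ∈ Finset.range (c+1),
      qbinom q c (ℓ:ℤ) * (f (T.g ^ (s+ℓ) * T.x ^ (c-ℓ)) * f' (T.g ^ s * T.x ^ ℓ)) := by
  simp only [conv, LinearMap.comp_apply]
  rw [comul_basis T s c, map_sum, map_sum]
  refine Finset.sum_congr rfl fun ℓ _ => ?_
  rw [map_smul, TensorProduct.map_tmul, map_smul, LinearMap.mul'_apply, smul_eq_mul]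
theorem fin_eq_of_dvd {n : ℕ} (i s : Fin n) (h : (n:ℤ) ∣ (((i:ℕ):ℤ) - ((s:ℕ):ℤ))) : s = i := by
  obtain ⟨c, hc⟩ := h
  have h1 := i.isLt
  have h2 := s.isLt
  have hc0 : c = 0 := by
    rcases lt_trichotomy c 0 with h | h | h
    · nlinarith [hc, (by exact_mod_cast h1 : ((i:ℕ):ℤ) < (n:ℤ)),
        (by positivity : (0:ℤ) ≤ ((s:ℕ):ℤ))]
    · exact h
    · nlinarith [hc, (by exact_mod_cast h2 : ((s:ℕ):ℤ) < (n:ℤ)),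
        (by positivity : (0:ℤ) ≤ ((i:ℕ):ℤ))]
  rw [hc0, mul_zero, sub_eq_zero] at hc
  have : (i:ℕ) = (s:ℕ) := by exact_mod_cast hc
  exact (Fin.ext this).symm
/-- Lemma 3.2.1: the linear map `ψ : T_n(q) → (T_n(q))*` defined on the canonical basis by
`ψ(g^i x^j) = Σ_{m=0}^{n−1} (j)_q! · q^{−i(m+j) − jm − j(j−1)/2} · (g^m x^j)*` is an
isomorphism of Hopf algebras: `ψ` is bijective with inverse `φ` given by
`φ((g^i x^j)*) = (1/n)·((j)_q!)⁻¹·q^{ij + j(j−1)/2}·Σ_{m=0}^{n−1} q^{m(i+j)} g^m x^j`,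
`ψ(h h') = ψ(h) * ψ(h')` (convolution product) and `ψ(1) = ε`, and for all `h, c, c'` one has
`ψ(h)(c c') = Σ ψ(h₁)(c)·ψ(h₂)(c')` and `ψ(h)(1) = ε(h)`.
Here `(g^m x^j)*` is the dual basis functional `T.basis.coord (m, j)`. -/
theorem lemma_3_2_1 {k H : Type*} [Field k] [Ring H] [HopfAlgebra k H]
    {n : ℕ} (hn : 2 ≤ n) {q : k} (hq : IsPrimitiveRoot q n)
    (T : TaftData k n q H)
    (ψ : H →ₗ[k] (H →ₗ[k] k)) (φ : (H →ₗ[k] k) →ₗ[k] H)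
    (hψ : ∀ i j : Fin n, ψ (T.g ^ (i : ℕ) * T.x ^ (j : ℕ)) =
      ∑ m : Fin n,
        (qfact q (j : ℕ) *
          q ^ (-(((i : ℕ) * ((m : ℕ) + (j : ℕ)) : ℕ) : ℤ) - (((j : ℕ) * (m : ℕ) : ℕ) : ℤ)
            - ((((j : ℕ) * ((j : ℕ) - 1) / 2 : ℕ)) : ℤ))) • T.basis.coord (m, j))
    (hφ : ∀ i j : Fin n, φ (T.basis.coord (i, j)) =
      ((n : k)⁻¹ * (qfact q (j : ℕ))⁻¹ * q ^ ((i : ℕ) * (j : ℕ) + (j : ℕ) * ((j : ℕ) - 1) / 2)) •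
        ∑ m : Fin n, q ^ ((m : ℕ) * ((i : ℕ) + (j : ℕ))) • (T.g ^ (m : ℕ) * T.x ^ (j : ℕ))) :
    Function.Bijective ψ ∧
    (∀ f : H →ₗ[k] k, ψ (φ f) = f) ∧
    (∀ h : H, φ (ψ h) = h) ∧
    ψ 1 = Coalgebra.counit (R := k) ∧
    (∀ h h' : H, ψ (h * h') = conv k H (ψ h) (ψ h')) ∧
    (∀ h c c' : H, ψ h (c * c') = conv k H (ψ.flip c) (ψ.flip c') h) ∧
    (∀ h : H, ψ h 1 = Coalgebra.counit (R := k) h) := by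
  have hq0 : q ≠ 0 := hq.ne_zero (by omega)
  have hψ' : ∀ i j : Fin n, ψ (T.g ^ (i:ℕ) * T.x ^ (j:ℕ))
      = ∑ m : Fin n, (qfact q (j:ℕ) * q ^ EE (i:ℕ) (j:ℕ) (m:ℕ)) • T.basis.coord (m, j) := by
    intro i j
    rw [hψ i j]
    refine Finset.sum_congr rfl fun m _ => ?_
    have he : (-(((i:ℕ) * ((m:ℕ) + (j:ℕ)) : ℕ) : ℤ) - (((j:ℕ)*(m:ℕ) : ℕ):ℤ)
        - ((((j:ℕ)*((j:ℕ)-1)/2 : ℕ)):ℤ)) = EE (i:ℕ) (j:ℕ) (m:ℕ) := by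
      simp only [EE]
      push_cast
      ring
    rw [he]
  have psiEval : ∀ i j a b : ℕ, ψ (T.g ^ i * T.x ^ j) (T.g ^ a * T.x ^ b)
      = if j = b then qfact q j * q ^ EE i j a else 0 := by
    intro i j a b
    rcases Nat.lt_or_ge j n with hj | hj
    · rw [g_pow_mod T i, hψ' ⟨i % n, Nat.mod_lt _ (by omega)⟩ ⟨j, hj⟩, LinearMap.sum_apply]
      simp only [LinearMap.smul_apply, coord_basis hn T, smul_eq_mul]
      rcases eq_or_ne j b with rfl | hne
      · rw [Finset.sum_eq_single (⟨a % n, Nat.mod_lt _ (by omega)⟩ : Fin n), if_pos rfl]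
        · rw [if_pos ⟨rfl, rfl⟩, mul_one]
          congr 1
          exact (zpow_congr hn hq (EE_congr hn i j a)).symm
        · intro m' _ hne'
          rw [if_neg, mul_zero]
          rintro ⟨h1, -⟩
          exact hne' (Fin.ext h1)
        · intro hmem
          exact absurd (Finset.mem_univ _) hmem
      · rw [if_neg hne]
        apply Finset.sum_eq_zero
        intro m' _
        rw [if_neg, mul_zero]
        rintro ⟨-, h2⟩
        exact hne h2
    · rw [x_pow_zero T hj, mul_zero, map_zero, LinearMap.zero_apply]
      rcases eq_or_ne j b with rfl | hne
      · rw [if_pos rfl, qfact_zero_of_le hn hq j hj, zero_mul]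
      · rw [if_neg hne]
  -- part 3 : ψ 1 = counit
  have part3 : ψ 1 = Coalgebra.counit (R := k) := by
    apply T.basis.ext
    rintro ⟨a, b⟩
    rw [T.basis_eq, show (1:H) = T.g ^ (0:ℕ) * T.x ^ (0:ℕ) by simp,
      psiEval 0 0 (a:ℕ) (b:ℕ), counit_basis T]
    split_ifs with h1 h2 h2
    · simp [EE, qfact]
    · omega
    · omega
    · rfl
  -- part 6 : ψ h 1 = counit h
  have part6 : ∀ h : H, ψ h 1 = Coalgebra.counit (R := k) h := by
    have key : ψ.flip 1 = Coalgebra.counit (R := k) := by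
      apply T.basis.ext
      rintro ⟨a, b⟩
      rw [T.basis_eq]
      show ψ (T.g ^ (a:ℕ) * T.x ^ (b:ℕ)) 1 = _
      rw [show (1:H) = T.g ^ (0:ℕ) * T.x ^ (0:ℕ) by simp,
        psiEval (a:ℕ) (b:ℕ) 0 0, counit_basis T]
      split_ifs with h1
      · rw [h1]
        simp [EE, qfact]
      · rfl
    intro h
    exact LinearMap.congr_fun key h
  -- part 4 : multiplicativity
  have part4 : ∀ h h' : H, ψ (h * h') = conv k H (ψ h) (ψ h') := by
    have key : (LinearMap.mul k H).compr₂ ψ = (convBil k H ∘ₗ ψ).compl₂ ψ := by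
      apply T.basis.ext
      rintro ⟨i, j⟩
      apply T.basis.ext
      rintro ⟨a, b⟩
      show ψ (T.basis (i,j) * T.basis (a,b)) = convBil k H (ψ (T.basis (i,j))) (ψ (T.basis (a,b)))
      rw [T.basis_eq, T.basis_eq, convBil_apply]
      apply T.basis.ext
      rintro ⟨s, c⟩
      rw [T.basis_eq, basis_mul_basis T, map_smul, LinearMap.smul_apply,
        psiEval ((i:ℕ)+(a:ℕ)) ((j:ℕ)+(b:ℕ)) (s:ℕ) (c:ℕ), conv_basis T, smul_eq_mul]
      simp only [psiEval]
      rcases Nat.lt_or_ge (c:ℕ) (b:ℕ) with hcb | hcb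
      · rw [if_neg (by omega), mul_zero]
        symm
        apply Finset.sum_eq_zero
        intro ℓ hℓ
        have hne : ¬ ((b:ℕ) = ℓ) := by have := Finset.mem_range.1 hℓ; omega
        rw [if_neg hne, mul_zero, mul_zero]
      · rw [Finset.sum_eq_single (b:ℕ)]
        · rw [if_pos rfl]
          rcases eq_or_ne ((j:ℕ) + (b:ℕ)) (c:ℕ) with hc | hc
          · rw [if_pos hc, if_pos (by omega)]
            have hfact : qbinom q (c:ℕ) (((b:ℕ):ℕ):ℤ) * qfact q (j:ℕ) * qfact q (b:ℕ)
                = qfact q ((j:ℕ)+(b:ℕ)) := by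
              rw [hc]
              exact qfact_mul_qbinom q (c:ℕ) (j:ℕ) (b:ℕ) hc
            have hexp : (q:k) ^ ((a:ℕ)*(j:ℕ)) * q ^ EE ((i:ℕ)+(a:ℕ)) ((j:ℕ)+(b:ℕ)) (s:ℕ)
                = q ^ EE (i:ℕ) (j:ℕ) ((s:ℕ)+(b:ℕ)) * q ^ EE (a:ℕ) (b:ℕ) (s:ℕ) := by
              rw [← zpow_natCast q ((a:ℕ)*(j:ℕ)), ← zpow_add₀ hq0, ← zpow_add₀ hq0, EE_add1]
            rw [← hfact]
            linear_combination (qbinom q (c:ℕ) (((b:ℕ):ℕ):ℤ) * qfact q (j:ℕ) * qfact q (b:ℕ))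
              * hexp
          · rw [if_neg hc, if_neg (by omega)]
            simp
        · intro ℓ _ hℓ
          rw [if_neg (show ¬ ((b:ℕ) = ℓ) from fun hh => hℓ hh.symm), mul_zero, mul_zero]
        · intro hmem
          exact absurd (Finset.mem_range.2 (by omega)) hmem
    intro h h'
    have := LinearMap.congr_fun (LinearMap.congr_fun key h) h'
    exact this
  -- part 5 : comultiplicativity
  have part5 : ∀ h c c' : H, ψ h (c * c') = conv k H (ψ.flip c) (ψ.flip c') h := by
    have key : (LinearMap.mul k H).compr₂ ψ.flip = (convBil k H ∘ₗ ψ.flip).compl₂ ψ.flip := by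
      apply T.basis.ext
      rintro ⟨a, b⟩
      apply T.basis.ext
      rintro ⟨s, t⟩
      show ψ.flip (T.basis (a,b) * T.basis (s,t))
        = convBil k H (ψ.flip (T.basis (a,b))) (ψ.flip (T.basis (s,t)))
      rw [T.basis_eq, T.basis_eq, convBil_apply]
      apply T.basis.ext
      rintro ⟨i, j⟩
      rw [T.basis_eq, basis_mul_basis T, conv_basis T]
      show ψ (T.g ^ (i:ℕ) * T.x ^ (j:ℕ))
          (q ^ ((s:ℕ)*(b:ℕ)) • (T.g ^ ((a:ℕ)+(s:ℕ)) * T.x ^ ((b:ℕ)+(t:ℕ)))) = _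
      rw [map_smul, smul_eq_mul, psiEval (i:ℕ) (j:ℕ) ((a:ℕ)+(s:ℕ)) ((b:ℕ)+(t:ℕ))]
      simp only [LinearMap.flip_apply, psiEval]
      rcases Nat.lt_or_ge (j:ℕ) (t:ℕ) with hjt | hjt
      · rw [if_neg (by omega), mul_zero]
        symm
        apply Finset.sum_eq_zero
        intro ℓ hℓ
        have hne : ¬ (ℓ = (t:ℕ)) := by have := Finset.mem_range.1 hℓ; omega
        rw [if_neg hne, mul_zero, mul_zero]
      · rw [Finset.sum_eq_single (t:ℕ)]
        · rw [if_pos rfl]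
          rcases eq_or_ne ((j:ℕ) - (t:ℕ)) (b:ℕ) with hb | hb
          · rw [if_pos hb, if_pos (by omega), hb,
              show (j:ℕ) = (b:ℕ) + (t:ℕ) by omega]
            have hfact : qbinom q ((b:ℕ)+(t:ℕ)) ((t:ℕ):ℤ) * qfact q (b:ℕ) * qfact q (t:ℕ)
                = qfact q ((b:ℕ)+(t:ℕ)) := qfact_mul_qbinom q _ (b:ℕ) (t:ℕ) rfl
            have hexp : (q:k) ^ ((s:ℕ)*(b:ℕ)) * q ^ EE (i:ℕ) ((b:ℕ)+(t:ℕ)) ((a:ℕ)+(s:ℕ))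
                = q ^ EE ((i:ℕ)+(t:ℕ)) (b:ℕ) (a:ℕ) * q ^ EE (i:ℕ) (t:ℕ) (s:ℕ) := by
              rw [← zpow_natCast q ((s:ℕ)*(b:ℕ)), ← zpow_add₀ hq0, ← zpow_add₀ hq0, EE_add2]
            rw [← hfact]
            linear_combination (qbinom q ((b:ℕ)+(t:ℕ)) (((t:ℕ):ℕ):ℤ) * qfact q (b:ℕ)
              * qfact q (t:ℕ)) * hexp
          · rw [if_neg hb, if_neg (by omega)]
            simp
        · intro ℓ _ hℓ
          rw [if_neg hℓ, mul_zero, mul_zero]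
        · intro hmem
          exact absurd (Finset.mem_range.2 (by omega)) hmem
    intro h c c'
    have h1 := LinearMap.congr_fun (LinearMap.congr_fun (LinearMap.congr_fun key c) c') h
    exact h1
  have hfj : ∀ j : Fin n, qfact q (j:ℕ) ≠ 0 := fun j => qfact_ne_zero hn hq _ j.isLt
  have hnk : (n:k) ≠ 0 := n_ne_zero hn hq
  have hgauss : ∀ (i s : Fin n), ∑ m : Fin n, q ^ (((m:ℕ):ℤ) * (((i:ℕ):ℤ) - ((s:ℕ):ℤ)))
      = if s = i then (n:k) else 0 := by
    intro i s
    rw [Fin.sum_univ_eq_sum_range (fun m => q ^ (((m:ℕ):ℤ) * (((i:ℕ):ℤ) - ((s:ℕ):ℤ)))) n,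
      gauss_sum hn hq (((i:ℕ):ℤ) - ((s:ℕ):ℤ))]
    by_cases hd : (n:ℤ) ∣ (((i:ℕ):ℤ) - ((s:ℕ):ℤ))
    · rw [if_pos hd, if_pos (fin_eq_of_dvd i s hd)]
    · rw [if_neg hd, if_neg (fun hc => hd (by rw [hc]; simp))]
  -- part 1 : φ ∘ ψ = id
  have part1 : ∀ h : H, φ (ψ h) = h := by
    have key : φ ∘ₗ ψ = LinearMap.id := by
      apply T.basis.ext
      rintro ⟨i, j⟩
      rw [LinearMap.comp_apply, LinearMap.id_apply, T.basis_eq, hψ' i j, map_sum]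
      simp only [map_smul, hφ]
      simp only [Finset.smul_sum, smul_smul]
      rw [Finset.sum_comm]
      have hcoef : ∀ m' : Fin n, (∑ m : Fin n, qfact q (j:ℕ) * q ^ EE (i:ℕ) (j:ℕ) (m:ℕ) *
          ((n:k)⁻¹ * (qfact q (j:ℕ))⁻¹ * q ^ ((m:ℕ)*(j:ℕ) + (j:ℕ)*((j:ℕ)-1)/2) *
            q ^ ((m':ℕ) * ((m:ℕ)+(j:ℕ)))))
          = if i = m' then 1 else 0 := by
        intro m'
        have e1 : ∀ m : Fin n, qfact q (j:ℕ) * q ^ EE (i:ℕ) (j:ℕ) (m:ℕ) *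
            ((n:k)⁻¹ * (qfact q (j:ℕ))⁻¹ * q ^ ((m:ℕ)*(j:ℕ) + (j:ℕ)*((j:ℕ)-1)/2) *
              q ^ ((m':ℕ) * ((m:ℕ)+(j:ℕ))))
            = ((n:k)⁻¹ * q ^ (((j:ℕ):ℤ)*(((m':ℕ):ℤ) - ((i:ℕ):ℤ)))) *
                q ^ (((m:ℕ):ℤ)*(((m':ℕ):ℤ) - ((i:ℕ):ℤ))) := by
          intro m
          have hz : q ^ EE (i:ℕ) (j:ℕ) (m:ℕ)
              * q ^ ((((m:ℕ)*(j:ℕ) + (j:ℕ)*((j:ℕ)-1)/2 : ℕ)):ℤ)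
              * q ^ ((((m':ℕ)*((m:ℕ)+(j:ℕ)) : ℕ)):ℤ)
              = q ^ (((j:ℕ):ℤ)*(((m':ℕ):ℤ) - ((i:ℕ):ℤ)))
                * q ^ (((m:ℕ):ℤ)*(((m':ℕ):ℤ) - ((i:ℕ):ℤ))) := by
            rw [← zpow_add₀ hq0, ← zpow_add₀ hq0, ← zpow_add₀ hq0]
            congr 1
            simp only [EE]
            push_cast
            ring
          calc qfact q (j:ℕ) * q ^ EE (i:ℕ) (j:ℕ) (m:ℕ) *
              ((n:k)⁻¹ * (qfact q (j:ℕ))⁻¹ * q ^ ((m:ℕ)*(j:ℕ) + (j:ℕ)*((j:ℕ)-1)/2) *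
                q ^ ((m':ℕ) * ((m:ℕ)+(j:ℕ))))
              = (qfact q (j:ℕ) * (qfact q (j:ℕ))⁻¹) * (n:k)⁻¹ *
                (q ^ EE (i:ℕ) (j:ℕ) (m:ℕ)
                  * q ^ ((((m:ℕ)*(j:ℕ) + (j:ℕ)*((j:ℕ)-1)/2 : ℕ)):ℤ)
                  * q ^ ((((m':ℕ)*((m:ℕ)+(j:ℕ)) : ℕ)):ℤ)) := by
                rw [zpow_natCast, zpow_natCast]
                ring
            _ = ((n:k)⁻¹ * q ^ (((j:ℕ):ℤ)*(((m':ℕ):ℤ) - ((i:ℕ):ℤ)))) *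
                q ^ (((m:ℕ):ℤ)*(((m':ℕ):ℤ) - ((i:ℕ):ℤ))) := by
                rw [mul_inv_cancel₀ (hfj j), one_mul, hz]
                ring
        rw [Finset.sum_congr rfl (fun m _ => e1 m), ← Finset.mul_sum, hgauss m' i]
        rcases eq_or_ne i m' with rfl | hne
        · rw [if_pos rfl, if_pos rfl, sub_self, mul_zero, zpow_zero, mul_one,
            inv_mul_cancel₀ hnk]
        · rw [if_neg hne, if_neg hne, mul_zero]
      calc ∑ m' : Fin n, ∑ m : Fin n, (qfact q (j:ℕ) * q ^ EE (i:ℕ) (j:ℕ) (m:ℕ) *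
            ((n:k)⁻¹ * (qfact q (j:ℕ))⁻¹ * q ^ ((m:ℕ)*(j:ℕ) + (j:ℕ)*((j:ℕ)-1)/2) *
              q ^ ((m':ℕ) * ((m:ℕ)+(j:ℕ))))) • (T.g ^ (m':ℕ) * T.x ^ (j:ℕ))
          = ∑ m' : Fin n, (if i = m' then (1:k) else 0) • (T.g ^ (m':ℕ) * T.x ^ (j:ℕ)) := by
            refine Finset.sum_congr rfl fun m' _ => ?_
            rw [← Finset.sum_smul, hcoef m']
        _ = T.g ^ (i:ℕ) * T.x ^ (j:ℕ) := by
            simp [ite_smul, Finset.sum_ite_eq]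
    intro h
    exact LinearMap.congr_fun key h
  -- part 2 : ψ ∘ φ = id
  have part2 : ∀ f : H →ₗ[k] k, ψ (φ f) = f := by
    have key : ∀ p : Fin n × Fin n, ψ (φ (T.basis.coord p)) = T.basis.coord p := by
      rintro ⟨i, j⟩
      rw [hφ i j, map_smul, map_sum]
      simp only [map_smul, hψ']
      simp only [Finset.smul_sum, smul_smul]
      rw [Finset.sum_comm]
      have hcoef : ∀ s : Fin n, (∑ m : Fin n, (n:k)⁻¹ * (qfact q (j:ℕ))⁻¹ *
            q ^ ((i:ℕ)*(j:ℕ) + (j:ℕ)*((j:ℕ)-1)/2) *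
            (q ^ ((m:ℕ) * ((i:ℕ)+(j:ℕ))) * (qfact q (j:ℕ) * q ^ EE (m:ℕ) (j:ℕ) (s:ℕ))))
          = if s = i then 1 else 0 := by
        intro s
        have e1 : ∀ m : Fin n, (n:k)⁻¹ * (qfact q (j:ℕ))⁻¹ *
            q ^ ((i:ℕ)*(j:ℕ) + (j:ℕ)*((j:ℕ)-1)/2) *
            (q ^ ((m:ℕ) * ((i:ℕ)+(j:ℕ))) * (qfact q (j:ℕ) * q ^ EE (m:ℕ) (j:ℕ) (s:ℕ)))
            = ((n:k)⁻¹ * q ^ (((j:ℕ):ℤ)*(((i:ℕ):ℤ) - ((s:ℕ):ℤ)))) *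
                q ^ (((m:ℕ):ℤ)*(((i:ℕ):ℤ) - ((s:ℕ):ℤ))) := by
          intro m
          have hz : q ^ ((((i:ℕ)*(j:ℕ) + (j:ℕ)*((j:ℕ)-1)/2 : ℕ)):ℤ)
              * q ^ ((((m:ℕ)*((i:ℕ)+(j:ℕ)) : ℕ)):ℤ)
              * q ^ EE (m:ℕ) (j:ℕ) (s:ℕ)
              = q ^ (((j:ℕ):ℤ)*(((i:ℕ):ℤ) - ((s:ℕ):ℤ)))
                * q ^ (((m:ℕ):ℤ)*(((i:ℕ):ℤ) - ((s:ℕ):ℤ))) := by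
            rw [← zpow_add₀ hq0, ← zpow_add₀ hq0, ← zpow_add₀ hq0]
            congr 1
            simp only [EE]
            push_cast
            ring
          calc (n:k)⁻¹ * (qfact q (j:ℕ))⁻¹ *
              q ^ ((i:ℕ)*(j:ℕ) + (j:ℕ)*((j:ℕ)-1)/2) *
              (q ^ ((m:ℕ) * ((i:ℕ)+(j:ℕ))) * (qfact q (j:ℕ) * q ^ EE (m:ℕ) (j:ℕ) (s:ℕ)))
              = (qfact q (j:ℕ) * (qfact q (j:ℕ))⁻¹) * (n:k)⁻¹ *
                (q ^ ((((i:ℕ)*(j:ℕ) + (j:ℕ)*((j:ℕ)-1)/2 : ℕ)):ℤ)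
                  * q ^ ((((m:ℕ)*((i:ℕ)+(j:ℕ)) : ℕ)):ℤ)
                  * q ^ EE (m:ℕ) (j:ℕ) (s:ℕ)) := by
                rw [zpow_natCast, zpow_natCast]
                ring
            _ = ((n:k)⁻¹ * q ^ (((j:ℕ):ℤ)*(((i:ℕ):ℤ) - ((s:ℕ):ℤ)))) *
                q ^ (((m:ℕ):ℤ)*(((i:ℕ):ℤ) - ((s:ℕ):ℤ))) := by
                rw [mul_inv_cancel₀ (hfj j), one_mul, hz]
                ring
        rw [Finset.sum_congr rfl (fun m _ => e1 m), ← Finset.mul_sum, hgauss i s]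
        rcases eq_or_ne s i with rfl | hne
        · rw [if_pos rfl, if_pos rfl, sub_self, mul_zero, zpow_zero, mul_one,
            inv_mul_cancel₀ hnk]
        · rw [if_neg hne, if_neg hne, mul_zero]
      calc ∑ s : Fin n, ∑ m : Fin n, ((n:k)⁻¹ * (qfact q (j:ℕ))⁻¹ *
            q ^ ((i:ℕ)*(j:ℕ) + (j:ℕ)*((j:ℕ)-1)/2) *
            (q ^ ((m:ℕ) * ((i:ℕ)+(j:ℕ))) * (qfact q (j:ℕ) * q ^ EE (m:ℕ) (j:ℕ) (s:ℕ)))) •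
              T.basis.coord (s, j)
          = ∑ s : Fin n, (if s = i then (1:k) else 0) • T.basis.coord (s, j) := by
            refine Finset.sum_congr rfl fun s _ => ?_
            rw [← Finset.sum_smul, hcoef s]
        _ = T.basis.coord (i, j) := by
            simp [ite_smul, Finset.sum_ite_eq']
    have key2 : ψ ∘ₗ φ = LinearMap.id := by
      apply Module.Basis.ext T.basis.dualBasis
      intro p
      have hd : T.basis.dualBasis p = T.basis.coord p := by
        rw [Module.Basis.coe_dualBasis]
      rw [LinearMap.comp_apply, LinearMap.id_apply, hd, key p]
    intro f
    exact LinearMap.congr_fun key2 f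
  refine ⟨⟨Function.LeftInverse.injective part1, Function.RightInverse.surjective part2⟩,
    part2, part1, part3, part4, part5, part6⟩
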